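/- Let z₂, z₃ ∈ ℂ with |z₂|² + |z₃|² = 1. If (|z₂|² − |z₃|²)² + 16|z₂|²|z₃|² − 12 Re(z₂²z₃²) = 7 and Im(z₂²z₃²) = 0, then |z₂| = |z₃| = 1/√2 and z₃ = i·conj(z₂) or z₃ = −i·conj(z₂). -/

import Mathlib

noncomputable section

open Complex

/-- For `z₂, z₃ ∈ ℂ` with `|z₂|² + |z₃|² = 1`, if
`(|z₂|² − |z₃|²)² + 16|z₂|²|z₃|² − 12 Re(z₂²z₃²) = 7` and `Im(z₂²z₃²) = 0`, then
`|z₂| = |z₃| = 1/√2` and `z₃ = ± i conj(z₂)`. -/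
theorem cayley_condition_orbit_z2z3 (z₂ z₃ : ℂ)
    (h : Complex.normSq z₂ + Complex.normSq z₃ = 1)
    (h1 : (Complex.normSq z₂ - Complex.normSq z₃) ^ 2 +
      16 * Complex.normSq z₂ * Complex.normSq z₃ - 12 * (z₂ ^ 2 * z₃ ^ 2).re = 7)
    (h2 : (z₂ ^ 2 * z₃ ^ 2).im = 0) :
    ‖z₂‖ = 1 / Real.sqrt 2 ∧ ‖z₃‖ = 1 / Real.sqrt 2 ∧
    (z₃ = Complex.I * (starRingEnd ℂ) z₂ ∨ z₃ = -(Complex.I * (starRingEnd ℂ) z₂)) := by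
  set a := Complex.normSq z₂ with ha
  set b := Complex.normSq z₃ with hb
  have habs : ‖z₂ ^ 2 * z₃ ^ 2‖ = a * b := by
    rw [norm_mul, Complex.norm_pow, Complex.norm_pow, Complex.sq_norm, Complex.sq_norm]
  have hre_ge : -(a * b) ≤ (z₂ ^ 2 * z₃ ^ 2).re := by
    have h3 := Complex.abs_re_le_norm (z₂ ^ 2 * z₃ ^ 2)
    have h4 := neg_abs_le ((z₂ ^ 2 * z₃ ^ 2).re)
    rw [habs] at h3
    linarith
  have hab : a * b ≤ 1 / 4 := by nlinarith [sq_nonneg (a - b)]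
  -- from h1: a*b - re = 1/2
  have key : a * b - (z₂ ^ 2 * z₃ ^ 2).re = 1 / 2 := by nlinarith
  have hab4 : a * b = 1 / 4 := by nlinarith
  have hre : (z₂ ^ 2 * z₃ ^ 2).re = -(1 / 4) := by linarith
  have ha2 : a = 1 / 2 := by nlinarith [sq_nonneg (a - b)]
  have hb2 : b = 1 / 2 := by linarith
  have hw : z₂ ^ 2 * z₃ ^ 2 = -(1 / 4 : ℂ) := by
    apply Complex.ext
    · simp [hre]
    · simp [h2]
  have hu : (z₂ * z₃ - Complex.I / 2) * (z₂ * z₃ + Complex.I / 2) = 0 := by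
    have : (z₂ * z₃) ^ 2 = -(1 / 4 : ℂ) := by rw [← hw]; ring
    have hI : Complex.I ^ 2 = -1 := Complex.I_sq
    linear_combination this - (1/4 : ℂ) * hI
  have hz2 : z₂ ≠ 0 := by
    intro h0
    rw [ha, h0, Complex.normSq_zero] at ha2
    norm_num at ha2
  have hconj : z₂ * (Complex.I * (starRingEnd ℂ) z₂) = Complex.I / 2 := by
    rw [show z₂ * (Complex.I * (starRingEnd ℂ) z₂) = Complex.I * (z₂ * (starRingEnd ℂ) z₂) by ring,
      Complex.mul_conj]
    rw [← ha, ha2]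
    push_cast
    ring
  have hsqrt : Real.sqrt (1 / 2) = 1 / Real.sqrt 2 := by
    rw [one_div, one_div, ← Real.sqrt_inv]
  refine ⟨?_, ?_, ?_⟩
  · rw [Complex.norm_def, ← ha, ha2, hsqrt]
  · rw [Complex.norm_def, ← hb, hb2, hsqrt]
  · rcases mul_eq_zero.mp hu with h' | h'
    · left
      have h'' : z₂ * z₃ = Complex.I / 2 := by linear_combination h'
      exact mul_left_cancel₀ hz2 (by rw [h'', hconj])
    · right
      have h'' : z₂ * z₃ = -(Complex.I / 2) := by linear_combination h'
      apply mul_left_cancel₀ hz2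
      rw [h'', mul_neg, hconj]

end
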